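/- Each of the d coordinate hyperplanes {x : x_i = 0} defines a facet of the grlex polytope P. -/

import Mathlib

open Set Finset

/-- A polytope: convex hull of finitely many points. -/
def IsPolytope {n : ℕ} (X : Set (Fin n → ℝ)) : Prop :=
  ∃ V : Finset (Fin n → ℝ), X = convexHull ℝ (V : Set (Fin n → ℝ))

/-- Affine dimension of a set. -/
noncomputable def adim {n : ℕ} (S : Set (Fin n → ℝ)) : ℕ :=
  Module.finrank ℝ (vectorSpan ℝ S)

/-- `F` is a facet of `X`: an exposed face of affine dimension one less than `X`. -/
def IsFacet {n : ℕ} (X F : Set (Fin n → ℝ)) : Prop :=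
  IsExposed ℝ X F ∧ adim F + 1 = adim X

/-- Two vertices of `X` are adjacent if the segment joining them is an exposed face. -/
def AdjVert {n : ℕ} (X : Set (Fin n → ℝ)) (u v : Fin n → ℝ) : Prop :=
  u ≠ v ∧ u ∈ X.extremePoints ℝ ∧ v ∈ X.extremePoints ℝ ∧
    IsExposed ℝ X (segment ℝ u v)

/-- The convex cone generated by a set: all nonnegative multiples of convex combinations. -/
def coneHull {n : ℕ} (S : Set (Fin n → ℝ)) : Set (Fin n → ℝ) :=
  {0} ∪ {p | ∃ c : ℝ, 0 ≤ c ∧ ∃ z ∈ convexHull ℝ S, p = c • z}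

/-- The tangent cone of `X` at a vertex `v`:
`v + cone{x - v : x an adjacent vertex of v}`. -/
def tangentCone {n : ℕ} (X : Set (Fin n → ℝ)) (v : Fin n → ℝ) : Set (Fin n → ℝ) :=
  {p | ∃ y ∈ coneHull {z | ∃ x, AdjVert X v x ∧ z = x - v}, p = v + y}

/-- The graph (1-skeleton) of a polytope `X`, with the vertices of `X` as nodes. -/
def polyGraph {n : ℕ} (X : Set (Fin n → ℝ)) : SimpleGraph (Fin n → ℝ) where
  Adj := AdjVert X
  symm := by
    refine ⟨?_⟩
    intro u v h
    refine ⟨h.1.symm, h.2.2.1, h.2.1, ?_⟩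
    rw [segment_symm]; exact h.2.2.2
  loopless := by refine ⟨?_⟩; intro u h; exact h.1 rfl

/-- Real point corresponding to an integer point. -/
def toR {d : ℕ} (x : Fin d → ℤ) : Fin d → ℝ := fun i => (x i : ℝ)

/-- Lexicographic order comparing from the last coordinate. -/
def lexLe {d : ℕ} (x y : Fin d → ℤ) : Prop :=
  x = y ∨ ∃ i : Fin d, x i < y i ∧ ∀ k : Fin d, i < k → x k = y k

/-- Graded lexicographic order. -/
def grlexLe {d : ℕ} (x y : Fin d → ℤ) : Prop :=
  (∑ i, x i) < (∑ i, y i) ∨ ((∑ i, x i) = (∑ i, y i) ∧ lexLe x y)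

/-- Graded reverse lexicographic order. -/
def grevlexLe {d : ℕ} (x y : Fin d → ℤ) : Prop :=
  (∑ i, x i) < (∑ i, y i) ∨ ((∑ i, x i) = (∑ i, y i) ∧ lexLe y x)

/-- The grlex polytope `P = conv{x ∈ ℤᵈ : 0 ≤ x ≼_grlex θ}`. -/
def grlexP (d : ℕ) (θ : Fin d → ℤ) : Set (Fin d → ℝ) :=
  convexHull ℝ {p | ∃ x : Fin d → ℤ, (∀ i, 0 ≤ x i) ∧ grlexLe x θ ∧ p = toR x}

/-- The grevlex polytope `Q = conv{x ∈ ℤᵈ : 0 ≤ x ≼_grevlex θ}`. -/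
def grevlexQ (d : ℕ) (θ : Fin d → ℤ) : Set (Fin d → ℝ) :=
  convexHull ℝ {p | ∃ x : Fin d → ℤ, (∀ i, 0 ≤ x i) ∧ grevlexLe x θ ∧ p = toR x}

/-- `b`, the total sum of `θ`. -/
def bsum {d : ℕ} (θ : Fin d → ℤ) : ℤ := ∑ i, θ i

/-- `b̃ₖ`, the sum of the first `k` coordinates of `θ` (`k` is 1-indexed). -/
def btil {d : ℕ} (θ : Fin d → ℤ) (k : ℕ) : ℤ :=
  ∑ i ∈ Finset.univ.filter (fun i : Fin d => (i : ℕ) < k), θ i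

/-- The vertex `w = (b-1)e_d` of `P`. -/
def wP (d : ℕ) (θ : Fin d → ℤ) : Fin d → ℤ :=
  fun i => if (i : ℕ) = d - 1 then bsum θ - 1 else 0

/-- The vertex `u^k = ((b̃_{k-1}+1)e_{k-1}, θ_k - 1, θ_{k+1}, …, θ_d)` of `P` (paper's
1-indexing: coordinate `j` of the paper is index `j-1` here). -/
def uP (d : ℕ) (θ : Fin d → ℤ) (k : ℕ) : Fin d → ℤ :=
  fun i => if (i : ℕ) = k - 2 then btil θ (k - 1) + 1
    else if (i : ℕ) = k - 1 then θ i - 1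
    else if k ≤ (i : ℕ) then θ i else 0

/-- The vertex `v^{j,k} = (b̃_k e_j, 0, …, 0, θ_{k+1}, …, θ_d)` of `P` (1-indexed). -/
def vP (d : ℕ) (θ : Fin d → ℤ) (j k : ℕ) : Fin d → ℤ :=
  fun i => if (i : ℕ) = j - 1 then btil θ k
    else if k ≤ (i : ℕ) then θ i else 0

/-- The point `b·e_j` (1-indexed `j`). -/
def beP (d : ℕ) (θ : Fin d → ℤ) (j : ℕ) : Fin d → ℤ :=
  fun i => if (i : ℕ) = j - 1 then bsum θ else 0

/-- The vertex `u^k = (b̃_{k-1}e_{k-1}, θ_k, …, θ_d)` of `Q` (1-indexed, `2 ≤ k ≤ d+1`). -/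
def uQ (d : ℕ) (θ : Fin d → ℤ) (k : ℕ) : Fin d → ℤ :=
  fun i => if (i : ℕ) = k - 2 then btil θ (k - 1)
    else if k - 1 ≤ (i : ℕ) then θ i else 0

/-- The vertex `v^{j,k} = ((b̃_{k-1}-1)e_j, 0, …, 0, θ_k + 1, θ_{k+1}, …, θ_d)` of `Q`. -/
def vQ (d : ℕ) (θ : Fin d → ℤ) (j k : ℕ) : Fin d → ℤ :=
  fun i => if (i : ℕ) = j - 1 then btil θ (k - 1) - 1
    else if (i : ℕ) = k - 1 then θ i + 1
    else if k ≤ (i : ℕ) then θ i else 0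

/-- Edge boundary of a vertex set in a graph. -/
def eboundary {V : Type*} (G : SimpleGraph V) (S : Set V) : Set (V × V) :=
  {p | G.Adj p.1 p.2 ∧ p.1 ∈ S ∧ p.2 ∉ S}


namespace GrlexAux

variable {d : ℕ}

lemma sum_theta_ge (θ : Fin d → ℤ) (hθ : ∀ i, 1 ≤ θ i) : (d : ℤ) ≤ ∑ i, θ i := by
  calc (d : ℤ) = ∑ _i : Fin d, (1 : ℤ) := by simp
    _ ≤ ∑ i, θ i := Finset.sum_le_sum fun i _ => hθ i

lemma mem_grlexP (θ : Fin d → ℤ) (x : Fin d → ℤ) (hx : ∀ i, 0 ≤ x i)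
    (hs : (∑ i, x i) < ∑ i, θ i) : toR x ∈ grlexP d θ :=
  subset_convexHull ℝ _ ⟨x, hx, Or.inl hs, rfl⟩

lemma zero_mem_grlexP (hd : 3 ≤ d) (θ : Fin d → ℤ) (hθ : ∀ i, 1 ≤ θ i) :
    (0 : Fin d → ℝ) ∈ grlexP d θ := by
  have h := mem_grlexP θ 0 (fun i => le_refl 0) (by
    have := sum_theta_ge θ hθ
    simp only [Pi.zero_apply, Finset.sum_const_zero]
    omega)
  have he : toR (0 : Fin d → ℤ) = (0 : Fin d → ℝ) := by funext m; simp [toR]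
  rwa [he] at h

lemma single_mem_grlexP (hd : 3 ≤ d) (θ : Fin d → ℤ) (hθ : ∀ i, 1 ≤ θ i) (j : Fin d) :
    (Pi.single j 1 : Fin d → ℝ) ∈ grlexP d θ := by
  have h := mem_grlexP θ (fun m => if m = j then 1 else 0)
    (fun m => by by_cases h : m = j <;> simp [h]) (by
      rw [Finset.sum_ite_eq' Finset.univ j (fun _ => (1:ℤ))]
      have := sum_theta_ge θ hθ
      simp only [Finset.mem_univ, if_true]
      omega)
  have he : toR (fun m => if m = j then (1:ℤ) else 0) = (Pi.single j 1 : Fin d → ℝ) := by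
    funext m
    simp [toR, Pi.single_apply, apply_ite (fun z : ℤ => (z : ℝ))]
  rwa [he] at h

lemma grlexP_nonneg (θ : Fin d → ℤ) {p : Fin d → ℝ} (hp : p ∈ grlexP d θ) (i : Fin d) :
    0 ≤ p i := by
  have hsub : grlexP d θ ⊆ {q : Fin d → ℝ | ∀ i, 0 ≤ q i} := by
    apply convexHull_min
    · rintro q ⟨x, hx, -, rfl⟩ i
      simp only [toR]; exact_mod_cast hx i
    · intro q hq r hr a b ha hb hab i
      have := add_nonneg (mul_nonneg ha (hq i)) (mul_nonneg hb (hr i))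
      simpa using this
  exact hsub hp i

lemma ker_finrank (i : Fin d) :
    Module.finrank ℝ (LinearMap.ker (LinearMap.proj i : (Fin d → ℝ) →ₗ[ℝ] ℝ)) + 1 = d := by
  have h := LinearMap.finrank_range_add_finrank_ker (LinearMap.proj i : (Fin d → ℝ) →ₗ[ℝ] ℝ)
  have hsurj : LinearMap.range (LinearMap.proj i : (Fin d → ℝ) →ₗ[ℝ] ℝ) = ⊤ :=
    LinearMap.range_eq_top.2 (fun c => ⟨fun _ => c, rfl⟩)
  rw [hsurj, finrank_top, Module.finrank_self, Module.finrank_fin_fun] at h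
  omega

lemma single_li (i : Fin d) :
    LinearIndependent ℝ (fun j : {j : Fin d // j ≠ i} => (Pi.single (j : Fin d) 1 : Fin d → ℝ)) := by
  have := (Pi.basisFun ℝ (Fin d)).linearIndependent.comp
    (Subtype.val : {j : Fin d // j ≠ i} → Fin d) Subtype.val_injective
  convert this using 1
  funext j
  simp [Function.comp]

end GrlexAux

/-- Each of the `d` coordinate hyperplanes `{x : x_i = 0}` defines a facet of
the grlex polytope `P`. -/
theorem grlexP_coordinate_facets (d : ℕ) (hd : 3 ≤ d) (θ : Fin d → ℤ)
    (hθ : ∀ i, 1 ≤ θ i) (i : Fin d) :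
    IsFacet (grlexP d θ) (grlexP d θ ∩ {x | x i = 0}) := by
  constructor
  · -- exposed
    intro _
    refine ⟨-(ContinuousLinearMap.proj i), ?_⟩
    ext x
    simp only [Set.mem_inter_iff, Set.mem_setOf_eq, ContinuousLinearMap.neg_apply,
      ContinuousLinearMap.proj_apply, neg_le_neg_iff]
    constructor
    · rintro ⟨hx, hxi⟩
      exact ⟨hx, fun y hy => by rw [hxi]; exact GrlexAux.grlexP_nonneg θ hy i⟩
    · rintro ⟨hx, hmax⟩
      refine ⟨hx, le_antisymm ?_ (GrlexAux.grlexP_nonneg θ hx i)⟩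
      have h0 := hmax 0 (GrlexAux.zero_mem_grlexP hd θ hθ)
      simpa using h0
  · -- dimensions
    have hPtop : vectorSpan ℝ (grlexP d θ) = ⊤ := by
      refine le_antisymm le_top ?_
      rw [← (Pi.basisFun ℝ (Fin d)).span_eq, Submodule.span_le]
      rintro v ⟨j, rfl⟩
      rw [Pi.basisFun_apply]
      have := vsub_mem_vectorSpan ℝ (GrlexAux.single_mem_grlexP hd θ hθ j)
        (GrlexAux.zero_mem_grlexP hd θ hθ)
      simpa using this
    have hadimP : adim (grlexP d θ) = d := by
      rw [adim, hPtop, finrank_top, Module.finrank_fin_fun]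
    set F := grlexP d θ ∩ {x : Fin d → ℝ | x i = 0} with hF
    set K := LinearMap.ker (LinearMap.proj i : (Fin d → ℝ) →ₗ[ℝ] ℝ) with hK
    have hle : vectorSpan ℝ F ≤ K := by
      rw [vectorSpan, Submodule.span_le]
      rintro v ⟨x, hx, y, hy, rfl⟩
      simp only [SetLike.mem_coe, LinearMap.mem_ker, LinearMap.proj_apply]
      have : x i - y i = 0 := by rw [hx.2, hy.2]; ring
      simpa [hK, vsub_eq_sub] using this
    have hge : Submodule.span ℝ
        (Set.range (fun j : {j : Fin d // j ≠ i} => (Pi.single (j : Fin d) 1 : Fin d → ℝ)))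
        ≤ vectorSpan ℝ F := by
      rw [Submodule.span_le]
      rintro v ⟨j, rfl⟩
      have h1 : (Pi.single (j : Fin d) 1 : Fin d → ℝ) ∈ F := by
        refine ⟨GrlexAux.single_mem_grlexP hd θ hθ j, ?_⟩
        simp [Pi.single_apply, (j.2 : (j : Fin d) ≠ i), Ne.symm j.2]
      have h0 : (0 : Fin d → ℝ) ∈ F := by
        refine ⟨GrlexAux.zero_mem_grlexP hd θ hθ, by simp⟩
      have := vsub_mem_vectorSpan ℝ h1 h0
      simpa using this
    have hcard : Fintype.card {j : Fin d // j ≠ i} = d - 1 := by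
      simp [Fintype.card_subtype_compl]
    have hspanrank : Module.finrank ℝ (Submodule.span ℝ
        (Set.range (fun j : {j : Fin d // j ≠ i} => (Pi.single (j : Fin d) 1 : Fin d → ℝ))))
        = d - 1 := by
      rw [finrank_span_eq_card (GrlexAux.single_li i), hcard]
    have hub : Module.finrank ℝ (vectorSpan ℝ F) ≤ d - 1 := by
      have := Submodule.finrank_mono hle
      have hKr := GrlexAux.ker_finrank i
      rw [← hK] at hKr
      omega
    have hlb : d - 1 ≤ Module.finrank ℝ (vectorSpan ℝ F) := by
      have := Submodule.finrank_mono hge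
      omega
    have : adim F = d - 1 := le_antisymm hub hlb
    rw [this, hadimP]
    omega
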